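/- arXiv:1406.5311 — 10 statements merged into one kernel-verified Lean document; each statement's English description precedes it below -/
import Mathlib

section
/- Let A be a d×n real matrix with columns a_1,...,a_n. If the margin ρ = sup_{‖w‖=1} min_i ⟨w, a_i⟩ is strictly positive, then ρ equals the Euclidean distance from the origin to the convex hull of {a_1,...,a_n}, i.e. ρ = inf_{p ∈ Δ} ‖A p‖, where Δ is the probability simplex in ℝⁿ. -/
set_option maxHeartbeats 1000000 in
/-- If the margin `ρ = sup_{‖w‖=1} inf_i ⟪w, a i⟫` is strictly positive, then it equals
the distance from the origin to the convex hull of the columns, `inf_{p ∈ Δ} ‖A p‖`. -/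
theorem stmt_0 {d n : ℕ} (hn : 0 < n) (a : Fin n → EuclideanSpace ℝ (Fin d))
    (ρ : ℝ)
    (hρ : ρ = ⨆ w : {w : EuclideanSpace ℝ (Fin d) // ‖w‖ = 1},
      ⨅ i : Fin n, (inner ℝ (w : EuclideanSpace ℝ (Fin d)) (a i) : ℝ))
    (hpos : 0 < ρ) :
    ρ = ⨅ p : {p : Fin n → ℝ // (∀ i, 0 ≤ p i) ∧ ∑ i, p i = 1},
      ‖∑ i, (p : Fin n → ℝ) i • a i‖ := by
  classical
  have i0 : Fin n := ⟨0, hn⟩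
  haveI : Nonempty (Fin n) := ⟨i0⟩
  by_cases hW : Nonempty {w : EuclideanSpace ℝ (Fin d) // ‖w‖ = 1}
  case neg =>
    exfalso
    haveI := not_nonempty_iff.mp hW
    rw [hρ, Real.iSup_of_isEmpty] at hpos
    exact lt_irrefl 0 hpos
  haveI hP : Nonempty {p : Fin n → ℝ // (∀ i, 0 ≤ p i) ∧ ∑ i, p i = 1} := by
    refine ⟨⟨fun i => if i = i0 then 1 else 0, fun i => by positivity, ?_⟩⟩
    simp
  -- Step 1: ρ ≤ ‖∑ p i • a i‖ for every p in the simplex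
  have key1 : ∀ p : {p : Fin n → ℝ // (∀ i, 0 ≤ p i) ∧ ∑ i, p i = 1},
      ρ ≤ ‖∑ i, (p : Fin n → ℝ) i • a i‖ := by
    rintro ⟨p, hp0, hp1⟩
    rw [hρ]
    apply ciSup_le
    rintro ⟨w, hw⟩
    have h1 : (⨅ i : Fin n, (inner ℝ w (a i) : ℝ)) ≤ ∑ i, p i * (inner ℝ w (a i) : ℝ) := by
      calc (⨅ i : Fin n, (inner ℝ w (a i) : ℝ))
          = ∑ i, p i * (⨅ j : Fin n, (inner ℝ w (a j) : ℝ)) := by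
            rw [← Finset.sum_mul, hp1, one_mul]
        _ ≤ ∑ i, p i * (inner ℝ w (a i) : ℝ) := by
            apply Finset.sum_le_sum
            intro i _
            exact mul_le_mul_of_nonneg_left
              (ciInf_le (Finite.bddBelow_range _) i) (hp0 i)
    have h2 : ∑ i, p i * (inner ℝ w (a i) : ℝ) = (inner ℝ w (∑ i, p i • a i) : ℝ) := by
      rw [inner_sum]
      exact Finset.sum_congr rfl fun i _ => (real_inner_smul_right _ _ _).symm
    have h3 : (inner ℝ w (∑ i, p i • a i) : ℝ) ≤ ‖∑ i, p i • a i‖ := by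
      calc (inner ℝ w (∑ i, p i • a i) : ℝ) ≤ ‖w‖ * ‖∑ i, p i • a i‖ := real_inner_le_norm _ _
        _ = ‖∑ i, p i • a i‖ := by rw [hw, one_mul]
    linarith
  -- the convex hull and its norm-minimizer
  set K := convexHull ℝ (Set.range a) with hK
  have hKconv : Convex ℝ K := convex_convexHull _ _
  have hKcpt : IsCompact K := (Set.finite_range a).isCompact_convexHull (𝕜 := ℝ)
  have hKne : K.Nonempty := ⟨a i0, subset_convexHull _ _ (Set.mem_range_self i0)⟩
  obtain ⟨v, hvK, hvmin⟩ := hKcpt.exists_isMinOn hKne (continuous_norm.continuousOn)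
  haveI : Nonempty K := ⟨⟨v, hvK⟩⟩
  have hvmin' : ∀ y ∈ K, ‖v‖ ≤ ‖y‖ := fun y hy => hvmin hy
  -- representation of v as a convex combination
  obtain ⟨q, hq0, hq1, hqv⟩ : ∃ q : Fin n → ℝ, (∀ i, 0 ≤ q i) ∧ (∑ i, q i = 1) ∧
      ∑ i, q i • a i = v := by
    rw [hK, convexHull_range_eq_exists_affineCombination] at hvK
    obtain ⟨s, w, hw0, hw1, hwv⟩ := hvK
    refine ⟨fun i => if i ∈ s then w i else 0, fun i => by
      by_cases h : i ∈ s <;> simp [h, hw0 i], ?_, ?_⟩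
    · rw [Finset.sum_ite_mem, Finset.univ_inter, hw1]
    · rw [← hwv, Finset.affineCombination_eq_linear_combination s a w hw1]
      simp only [ite_smul, zero_smul]
      rw [Finset.sum_ite_mem, Finset.univ_inter]
  -- ρ ≤ ‖v‖, hence 0 < ‖v‖
  have hρv : ρ ≤ ‖v‖ := by
    have := key1 ⟨q, hq0, hq1⟩
    simpa [hqv] using this
  have hv0 : 0 < ‖v‖ := lt_of_lt_of_le hpos hρv
  -- projection inequality: ⟪v, y⟫ ≥ ‖v‖² for y ∈ K
  have hproj : ∀ y ∈ K, ‖v‖ ^ 2 ≤ (inner ℝ v y : ℝ) := by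
    have heq : ‖(0 : EuclideanSpace ℝ (Fin d)) - v‖ = ⨅ w : K, ‖(0 : EuclideanSpace ℝ (Fin d)) - w‖ := by
      have h1 : ‖v‖ ≤ ⨅ w : K, ‖(0 : EuclideanSpace ℝ (Fin d)) - (w : EuclideanSpace ℝ (Fin d))‖ := by
        refine le_ciInf fun w => ?_
        rw [zero_sub, norm_neg]
        exact hvmin' w w.2
      have hbdd : BddBelow (Set.range fun w : K =>
          ‖(0 : EuclideanSpace ℝ (Fin d)) - (w : EuclideanSpace ℝ (Fin d))‖) := by
        refine ⟨0, ?_⟩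
        rintro x ⟨y, rfl⟩
        exact norm_nonneg _
      have h2 : (⨅ w : K, ‖(0 : EuclideanSpace ℝ (Fin d)) - (w : EuclideanSpace ℝ (Fin d))‖)
          ≤ ‖(0 : EuclideanSpace ℝ (Fin d)) - v‖ := ciInf_le hbdd ⟨v, hvK⟩
      rw [zero_sub, norm_neg] at h2
      rw [zero_sub, norm_neg]
      exact le_antisymm h1 h2
    have hall := (norm_eq_iInf_iff_real_inner_le_zero hKconv hvK).mp heq
    intro y hy
    have h := hall y hy
    rw [zero_sub, inner_sub_right, inner_neg_left, inner_neg_left] at h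
    have h2 : (inner ℝ v v : ℝ) ≤ inner ℝ v y := by linarith
    calc ‖v‖ ^ 2 = (inner ℝ v v : ℝ) := (real_inner_self_eq_norm_sq v).symm
      _ ≤ inner ℝ v y := h2
  -- the dual witness w = v / ‖v‖
  have hρ2 : ‖v‖ ≤ ρ := by
    set w : EuclideanSpace ℝ (Fin d) := ‖v‖⁻¹ • v with hwdef
    have hwnorm : ‖w‖ = 1 := by
      rw [hwdef, norm_smul, norm_inv, norm_norm, inv_mul_cancel₀ (ne_of_gt hv0)]
    have hinner : ∀ i : Fin n, ‖v‖ ≤ (inner ℝ w (a i) : ℝ) := by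
      intro i
      have hai : a i ∈ K := subset_convexHull _ _ (Set.mem_range_self i)
      have hpi := hproj (a i) hai
      rw [hwdef, real_inner_smul_left]
      calc ‖v‖ = ‖v‖⁻¹ * ‖v‖ ^ 2 := by rw [pow_two]; field_simp
        _ ≤ ‖v‖⁻¹ * (inner ℝ v (a i) : ℝ) :=
            mul_le_mul_of_nonneg_left hpi (by positivity)
    have hle : ‖v‖ ≤ ⨅ i : Fin n, (inner ℝ w (a i) : ℝ) := le_ciInf hinner
    rw [hρ]
    refine le_trans hle (le_ciSup (f := fun u : {w : EuclideanSpace ℝ (Fin d) // ‖w‖ = 1} =>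
      ⨅ i : Fin n, (inner ℝ (u : EuclideanSpace ℝ (Fin d)) (a i) : ℝ)) ?_ ⟨w, hwnorm⟩)
    refine ⟨‖a i0‖, ?_⟩
    rintro x ⟨⟨u, hu⟩, rfl⟩
    calc (⨅ i : Fin n, (inner ℝ u (a i) : ℝ)) ≤ inner ℝ u (a i0) :=
          ciInf_le (Finite.bddBelow_range _) i0
      _ ≤ ‖u‖ * ‖a i0‖ := real_inner_le_norm _ _
      _ = ‖a i0‖ := by rw [hu, one_mul]
  -- conclude
  refine le_antisymm (le_ciInf key1) ?_
  have hinfv : (⨅ p : {p : Fin n → ℝ // (∀ i, 0 ≤ p i) ∧ ∑ i, p i = 1},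
      ‖∑ i, (p : Fin n → ℝ) i • a i‖) ≤ ‖v‖ := by
    have := ciInf_le (f := fun p : {p : Fin n → ℝ // (∀ i, 0 ≤ p i) ∧ ∑ i, p i = 1} =>
      ‖∑ i, (p : Fin n → ℝ) i • a i‖)
      ⟨0, by rintro x ⟨y, rfl⟩; exact norm_nonneg _⟩ ⟨q, hq0, hq1⟩
    simpa [hqv] using this
  linarith
end

section
/- Let a_1,...,a_n ∈ ℝ^d be unit vectors and let ρ⁺ := max(0, inf_{p∈Δ} ‖Ap‖) = inf_{p∈Δ} ‖Ap‖. Then the radius of the minimum enclosing Euclidean ball of {a_1,...,a_n} equals √(1 − (ρ⁺)²). Equivalently, min over centers c of max_i ‖c − a_i‖² equals 1 − inf_{p∈Δ} ‖Ap‖². -/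
open scoped BigOperators


/-- Minimum enclosing ball radius: min over centers `c` of `max_i ‖c - a_i‖²`
equals `1 - (inf_{p∈Δ} ‖Ap‖)²` when all the points `a_i` are unit vectors. -/
theorem stmt_2 {d n : ℕ} (hn : 0 < n) (a : Fin n → EuclideanSpace ℝ (Fin d))
    (ha : ∀ i, ‖a i‖ = 1) :
    (⨅ c : EuclideanSpace ℝ (Fin d), ⨆ i : Fin n, ‖c - a i‖ ^ 2)
      = 1 - (⨅ p : {p : Fin n → ℝ // (∀ i, 0 ≤ p i) ∧ ∑ i, p i = 1},
          ‖∑ i, (p : Fin n → ℝ) i • a i‖) ^ 2 := by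
  classical
  haveI : Nonempty (Fin n) := ⟨⟨0, hn⟩⟩
  set A : (Fin n → ℝ) → EuclideanSpace ℝ (Fin d) := fun p => ∑ i, p i • a i with hA
  have hinner : ∀ (c : EuclideanSpace ℝ (Fin d)) q, (inner ℝ (c) (A q) : ℝ) = ∑ i, q i * (inner ℝ (c) (a i) : ℝ) := by
    intro c q
    rw [hA]
    rw [inner_sum]
    exact Finset.sum_congr rfl fun i _ => real_inner_smul_right _ _ _
  have hexp : ∀ (c : EuclideanSpace ℝ (Fin d)) (q : Fin n → ℝ), (∑ i, q i = 1) →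
      ∑ i, q i * ‖c - a i‖ ^ 2 = ‖c‖ ^ 2 - 2 * (inner ℝ (c) (A q) : ℝ) + 1 := by
    intro c q hq
    rw [hinner]
    have h1 : ∀ i ∈ Finset.univ, q i * ‖c - a i‖ ^ 2
        = q i * ‖c‖ ^ 2 - 2 * (q i * (inner ℝ (c) (a i) : ℝ)) + q i := by
      intro i _
      rw [norm_sub_sq_real, ha i]; ring
    rw [Finset.sum_congr rfl h1, Finset.sum_add_distrib, Finset.sum_sub_distrib,
      ← Finset.sum_mul, hq, Finset.mul_sum, one_mul]
  -- minimizer on the standard simplex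
  have hcont : ContinuousOn (fun p : Fin n → ℝ => ‖A p‖) (stdSimplex ℝ (Fin n)) := by
    apply Continuous.continuousOn
    exact continuous_norm.comp
      (continuous_finset_sum _ fun i _ => (continuous_apply i).smul continuous_const)
  have hne : (stdSimplex ℝ (Fin n)).Nonempty := by
    refine ⟨fun _ => (n : ℝ)⁻¹, fun i => by positivity, ?_⟩
    rw [Finset.sum_const, Finset.card_univ, Fintype.card_fin, nsmul_eq_mul]
    field_simp
  obtain ⟨p, hpmem, hpmin'⟩ := (isCompact_stdSimplex ℝ (Fin n)).exists_isMinOn hne hcont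
  have hpmin : ∀ q ∈ stdSimplex ℝ (Fin n), ‖A p‖ ≤ ‖A q‖ := fun q hq => hpmin' hq
  -- optimality condition
  have hopt : ∀ i, ‖A p‖ ^ 2 ≤ (inner ℝ (A p) (a i) : ℝ) := by
    intro i
    set K := ‖a i - A p‖ ^ 2 with hKdef
    have hK : 0 ≤ K := sq_nonneg _
    have key : ∀ t : ℝ, 0 < t → t ≤ 1 → 0 ≤ 2 * (inner ℝ (A p) (a i - A p) : ℝ) + t * K := by
      intro t ht ht1
      set q : Fin n → ℝ := fun j => (1 - t) * p j + t * (if j = i then 1 else 0) with hqdef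
      have hqmem : q ∈ stdSimplex ℝ (Fin n) := by
        constructor
        · intro j
          have h0 : (0:ℝ) ≤ (if j = i then (1:ℝ) else 0) := by split_ifs <;> norm_num
          have := hpmem.1 j
          have h1t : (0:ℝ) ≤ 1 - t := by linarith
          positivity
        · have : ∑ j, q j = (1 - t) * ∑ j, p j + t * ∑ j, (if j = i then (1:ℝ) else 0) := by
            rw [Finset.mul_sum, Finset.mul_sum, ← Finset.sum_add_distrib]
          rw [this, hpmem.2, Finset.sum_ite_eq' Finset.univ i (fun _ => (1:ℝ))]
          simp
      have hAq : A q = A p + t • (a i - A p) := by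
        have h1 : A q = ∑ j, (((1 - t) * p j) • a j + (t * (if j = i then (1:ℝ) else 0)) • a j) := by
          simp only [hA, hqdef, add_smul]
        rw [h1, Finset.sum_add_distrib]
        have h2 : ∑ j, ((1 - t) * p j) • a j = (1 - t) • A p := by
          rw [hA, Finset.smul_sum]
          exact Finset.sum_congr rfl fun j _ => by rw [smul_smul]
        have h3 : ∑ j, (t * (if j = i then (1:ℝ) else 0)) • a j = t • a i := by
          rw [Finset.sum_eq_single i]
          · simp
          · intro j _ hj; simp [hj]
          · simp
        rw [h2, h3]
        module
      have hle := hpmin q hqmem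
      rw [hAq] at hle
      have hsq : ‖A p‖ ^ 2 ≤ ‖A p + t • (a i - A p)‖ ^ 2 := by
        have := norm_nonneg (A p)
        nlinarith [hle]
      rw [norm_add_sq_real, real_inner_smul_right, norm_smul] at hsq
      have habs : |t| = t := abs_of_pos ht
      rw [Real.norm_eq_abs, habs] at hsq
      have hts : (t * ‖a i - A p‖) ^ 2 = t * (t * K) := by rw [hKdef]; ring
      nlinarith [hsq, ht]
    have hI : 0 ≤ (inner ℝ (A p) (a i - A p) : ℝ) := by
      by_contra h
      push_neg at h
      rcases eq_or_lt_of_le hK with hK0 | hK0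
      · have := key 1 one_pos le_rfl
        rw [← hK0] at this
        linarith
      · have htpos : 0 < min 1 (-(inner ℝ (A p) (a i - A p) : ℝ) / K) := by
          exact lt_min one_pos (div_pos (by linarith) hK0)
        have := key _ htpos (min_le_left _ _)
        have h2 : min 1 (-(inner ℝ (A p) (a i - A p) : ℝ) / K) * K ≤ -(inner ℝ (A p) (a i - A p) : ℝ) := by
          calc min 1 (-(inner ℝ (A p) (a i - A p) : ℝ) / K) * K ≤ (-(inner ℝ (A p) (a i - A p) : ℝ) / K) * K :=
                mul_le_mul_of_nonneg_right (min_le_right _ _) hK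
            _ = -(inner ℝ (A p) (a i - A p) : ℝ) := by field_simp
        linarith
    rw [inner_sub_right, real_inner_self_eq_norm_sq] at hI
    linarith
  -- value of the infimum on the RHS
  have hρ : (⨅ q : {p : Fin n → ℝ // (∀ i, 0 ≤ p i) ∧ ∑ i, p i = 1},
      ‖∑ i, (q : Fin n → ℝ) i • a i‖) = ‖A p‖ := by
    haveI : Nonempty {p : Fin n → ℝ // (∀ i, 0 ≤ p i) ∧ ∑ i, p i = 1} :=
      ⟨⟨p, hpmem.1, hpmem.2⟩⟩
    have hb : BddBelow (Set.range fun q : {p : Fin n → ℝ // (∀ i, 0 ≤ p i) ∧ ∑ i, p i = 1} =>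
        ‖∑ i, (q : Fin n → ℝ) i • a i‖) := ⟨0, by rintro x ⟨q, rfl⟩; exact norm_nonneg _⟩
    apply le_antisymm
    · exact ciInf_le hb ⟨p, hpmem.1, hpmem.2⟩
    · exact le_ciInf fun q => hpmin q (⟨q.2.1, q.2.2⟩ : (q : Fin n → ℝ) ∈ stdSimplex ℝ (Fin n))
  -- lower bound
  have hlow : ∀ c' : EuclideanSpace ℝ (Fin d), 1 - ‖A p‖ ^ 2 ≤ ⨆ i, ‖c' - a i‖ ^ 2 := by
    intro c'
    have hbdd : BddAbove (Set.range fun i : Fin n => ‖c' - a i‖ ^ 2) :=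
      Set.Finite.bddAbove (Set.finite_range _)
    have h1 : ∑ i, p i * ‖c' - a i‖ ^ 2 ≤ ⨆ i, ‖c' - a i‖ ^ 2 := by
      calc ∑ i, p i * ‖c' - a i‖ ^ 2 ≤ ∑ i, p i * (⨆ j, ‖c' - a j‖ ^ 2) :=
            Finset.sum_le_sum fun i _ =>
              mul_le_mul_of_nonneg_left (le_ciSup hbdd i) (hpmem.1 i)
        _ = ⨆ j, ‖c' - a j‖ ^ 2 := by rw [← Finset.sum_mul, hpmem.2, one_mul]
    have h2 := hexp c' p hpmem.2
    have h3 : (0:ℝ) ≤ ‖c' - A p‖ ^ 2 := sq_nonneg _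
    rw [norm_sub_sq_real] at h3
    linarith
  -- upper bound
  have hup : (⨆ i, ‖A p - a i‖ ^ 2) ≤ 1 - ‖A p‖ ^ 2 := by
    apply ciSup_le
    intro i
    have h := hopt i
    rw [norm_sub_sq_real, ha i]
    linarith
  rw [hρ]
  apply le_antisymm
  · exact le_trans (ciInf_le ⟨1 - ‖A p‖ ^ 2, by rintro x ⟨c', rfl⟩; exact hlow c'⟩ (A p)) hup
  · exact le_ciInf hlow
end

section
/- Let A ∈ ℝ^{d×n} with columns a_i, G = AᵀA, and affine margin ρ_A := sup_{w ∈ lin(A), ‖w‖=1} inf_{p∈Δ} ⟨w, Ap⟩. If ρ_A ≤ 0, then |ρ_A| = sup { R ≥ 0 : for all α ∈ ℝⁿ with ‖Aα‖ ≤ R, Aα ∈ conv{a_1,...,a_n} }, i.e. |ρ_A| is the radius of the largest ball in lin(A) centered at the origin contained in conv(A). -/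
/-- If the affine margin `ρ_A ≤ 0`, then `|ρ_A|` is the radius of the largest ball
in `lin(A)` centered at the origin contained in `conv(A)`. -/
theorem stmt_3 {d n : ℕ} (hn : 0 < n) (a : Fin n → EuclideanSpace ℝ (Fin d))
    (ρA : ℝ)
    (hρA : ρA = ⨆ w : {w : EuclideanSpace ℝ (Fin d) //
        w ∈ Submodule.span ℝ (Set.range a) ∧ ‖w‖ = 1},
      ⨅ i : Fin n, (inner ℝ (w : EuclideanSpace ℝ (Fin d)) (a i) : ℝ))
    (hneg : ρA ≤ 0) :
    |ρA| = sSup {R : ℝ | 0 ≤ R ∧ ∀ α : Fin n → ℝ,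
      ‖∑ i, α i • a i‖ ≤ R → (∑ i, α i • a i) ∈ convexHull ℝ (Set.range a)} := by
  classical
  set K : Submodule ℝ (EuclideanSpace ℝ (Fin d)) := Submodule.span ℝ (Set.range a) with hKdef
  set C : Set (EuclideanSpace ℝ (Fin d)) := convexHull ℝ (Set.range a) with hCdef
  have hCclosed : IsClosed C := ((Set.finite_range a).isCompact_convexHull (𝕜 := ℝ)).isClosed
  have hCconvex : Convex ℝ C := convex_convexHull ℝ _
  have haK : ∀ i, a i ∈ K := fun i => Submodule.subset_span ⟨i, rfl⟩
  have haC : ∀ i, a i ∈ C := fun i => subset_convexHull ℝ _ ⟨i, rfl⟩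
  have i0 : Fin n := ⟨0, hn⟩
  haveI : Nonempty (Fin n) := ⟨i0⟩
  have hBddBelow : ∀ w : EuclideanSpace ℝ (Fin d),
      BddBelow (Set.range fun i : Fin n => (inner ℝ w (a i) : ℝ)) :=
    fun w => (Set.finite_range _).bddBelow
  have hBddAbove : BddAbove (Set.range fun w : {w : EuclideanSpace ℝ (Fin d) //
        w ∈ K ∧ ‖w‖ = 1} => ⨅ i : Fin n, (inner ℝ (w : EuclideanSpace ℝ (Fin d)) (a i) : ℝ)) := by
    refine ⟨‖a i0‖, ?_⟩
    rintro x ⟨⟨w, hwK, hw1⟩, rfl⟩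
    refine le_trans (ciInf_le (hBddBelow w) i0) ?_
    calc (inner ℝ w (a i0) : ℝ) ≤ ‖w‖ * ‖a i0‖ := real_inner_le_norm _ _
    _ = ‖a i0‖ := by rw [hw1, one_mul]
  -- key: the ball of radius -ρA in K is contained in C
  have key : ∀ x, x ∈ K → ‖x‖ ≤ -ρA → x ∈ C := by
    intro x hxK hxr
    by_contra hxC
    obtain ⟨f, u, hfx, hfC⟩ := geometric_hahn_banach_point_closed hCconvex hCclosed hxC
    set v : EuclideanSpace ℝ (Fin d) := (InnerProductSpace.toDual ℝ _).symm f with hv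
    have hvf : ∀ y, (inner ℝ v y : ℝ) = f y := fun y => InnerProductSpace.toDual_symm_apply
    set v₁ : EuclideanSpace ℝ (Fin d) := (K.orthogonalProjection v : EuclideanSpace ℝ (Fin d))
      with hv1
    have hperp : v - v₁ ∈ Kᗮ := Submodule.sub_starProjection_mem_orthogonal (K := K) v
    have hinner : ∀ y ∈ K, (inner ℝ v₁ y : ℝ) = f y := by
      intro y hy
      have h0 : (inner ℝ (v - v₁) y : ℝ) = 0 :=
        (Submodule.mem_orthogonal' K (v - v₁)).mp hperp y hy
      rw [inner_sub_left] at h0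
      rw [← hvf y]
      linarith
    by_cases hv10 : v₁ = 0
    · have h1 : u < f (a i0) := hfC _ (haC i0)
      have h2 : f (a i0) = 0 := by rw [← hinner _ (haK i0), hv10, inner_zero_left]
      have h3 : f x = 0 := by rw [← hinner _ hxK, hv10, inner_zero_left]
      linarith
    · have hc : (0:ℝ) < ‖v₁‖ := norm_pos_iff.mpr hv10
      set w₀ : EuclideanSpace ℝ (Fin d) := ‖v₁‖⁻¹ • v₁ with hw₀
      have hw₀K : w₀ ∈ K := K.smul_mem _ (K.orthogonalProjection v).2
      have hw₀1 : ‖w₀‖ = 1 := by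
        rw [hw₀, norm_smul, norm_inv, norm_norm, inv_mul_cancel₀ (ne_of_gt hc)]
      have hle : (⨅ i : Fin n, (inner ℝ w₀ (a i) : ℝ)) ≤ ρA := by
        rw [hρA]
        exact le_ciSup hBddAbove ⟨w₀, hw₀K, hw₀1⟩
      have h1 : ‖v₁‖⁻¹ * u ≤ ⨅ i : Fin n, (inner ℝ w₀ (a i) : ℝ) := by
        refine le_ciInf fun i => ?_
        have hui : u ≤ f (a i) := le_of_lt (hfC _ (haC i))
        rw [hw₀, real_inner_smul_left, hinner _ (haK i)]
        exact mul_le_mul_of_nonneg_left hui (le_of_lt (inv_pos.mpr hc))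
      have h2 : (inner ℝ w₀ x : ℝ) < ‖v₁‖⁻¹ * u := by
        rw [hw₀, real_inner_smul_left, hinner _ hxK]
        exact mul_lt_mul_of_pos_left hfx (inv_pos.mpr hc)
      have h3 : -‖x‖ ≤ (inner ℝ w₀ x : ℝ) := by
        have habs : |(inner ℝ w₀ x : ℝ)| ≤ ‖w₀‖ * ‖x‖ := abs_real_inner_le_norm _ _
        rw [hw₀1, one_mul] at habs
        have := neg_abs_le (inner ℝ w₀ x : ℝ)
        linarith
      linarith
  set S : Set ℝ := {R : ℝ | 0 ≤ R ∧ ∀ α : Fin n → ℝ,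
      ‖∑ i, α i • a i‖ ≤ R → (∑ i, α i • a i) ∈ C} with hSdef
  have hrS : -ρA ∈ S := by
    refine ⟨neg_nonneg.2 hneg, fun α hα => key _ ?_ hα⟩
    exact Submodule.sum_mem _ fun i _ => K.smul_mem _ (haK i)
  by_cases hA0 : ∀ i, a i = 0
  · have hKbot : K = ⊥ := by
      rw [hKdef, Submodule.span_eq_bot]
      rintro x ⟨i, rfl⟩; exact hA0 i
    haveI : IsEmpty {w : EuclideanSpace ℝ (Fin d) // w ∈ K ∧ ‖w‖ = 1} := by
      refine ⟨fun w => ?_⟩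
      obtain ⟨w, hwK, hw1⟩ := w
      rw [hKbot, Submodule.mem_bot] at hwK
      rw [hwK, norm_zero] at hw1
      exact one_ne_zero hw1.symm
    have hρ0 : ρA = 0 := by rw [hρA]; exact Real.iSup_of_isEmpty _
    have hSeq : S = Set.Ici 0 := by
      ext R
      simp only [hSdef, Set.mem_setOf_eq, Set.mem_Ici]
      constructor
      · exact fun h => h.1
      · intro hR
        refine ⟨hR, fun α _ => ?_⟩
        have hsum : (∑ i, α i • a i) = a i0 := by
          rw [hA0 i0]
          simp [hA0]
        rw [hsum]; exact haC i0
    rw [hρ0, abs_zero, hSeq, Real.sSup_of_not_bddAbove (not_bddAbove_Ici (0:ℝ))]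
  · push_neg at hA0
    obtain ⟨j, hj⟩ := hA0
    haveI hWne : Nonempty {w : EuclideanSpace ℝ (Fin d) // w ∈ K ∧ ‖w‖ = 1} := by
      refine ⟨⟨‖a j‖⁻¹ • a j, K.smul_mem _ (haK j), ?_⟩⟩
      rw [norm_smul, norm_inv, norm_norm, inv_mul_cancel₀ (norm_ne_zero_iff.mpr hj)]
    have hbound : ∀ R ∈ S, R ≤ -ρA := by
      rintro R ⟨hR0, hRball⟩
      rw [le_neg, hρA]
      refine ciSup_le ?_
      rintro ⟨w, hwK, hw1⟩
      have hxK : (R • (-w)) ∈ K := K.smul_mem _ (K.neg_mem hwK)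
      have hxC : (R • (-w)) ∈ C := by
        obtain ⟨α, hα⟩ := (Submodule.mem_span_range_iff_exists_fun ℝ).1 hxK
        have hnorm : ‖∑ i, α i • a i‖ ≤ R := by
          rw [hα, norm_smul, norm_neg, hw1, mul_one, Real.norm_eq_abs, abs_of_nonneg hR0]
        have := hRball α hnorm
        rwa [hα] at this
      have hsub : C ⊆ {y | (⨅ i : Fin n, (inner ℝ w (a i) : ℝ)) ≤ inner ℝ w y} := by
        refine convexHull_min ?_ (convex_halfSpace_ge ?_ _)
        · rintro y ⟨i, rfl⟩
          exact ciInf_le (hBddBelow w) i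
        · exact ⟨fun x y => inner_add_right _ _ _, fun c x => real_inner_smul_right _ _ _⟩
      have hwx : (inner ℝ w (R • (-w)) : ℝ) = -R := by
        rw [real_inner_smul_right, inner_neg_right, real_inner_self_eq_norm_sq, hw1]
        ring
      have hhalf : (⨅ i : Fin n, (inner ℝ w (a i) : ℝ)) ≤ inner ℝ w (R • (-w)) := hsub hxC
      rw [hwx] at hhalf
      exact hhalf
    have hbdd : BddAbove S := ⟨-ρA, fun R hR => hbound R hR⟩
    rw [abs_of_nonpos hneg]
    exact le_antisymm (le_csSup hbdd hrS) (csSup_le ⟨-ρA, hrS⟩ hbound)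
end

section
/- If ρ_A ≤ −γ for some γ ≥ 0 (where ρ_A is the affine margin of A), then every vector v ∈ lin(A) with ‖v‖ ≤ γ can be written as v = A p for some probability vector p ∈ Δ. -/
open RealInnerProductSpace

/-- If `ρ_A ≤ -γ` for some `γ ≥ 0`, then every `v ∈ lin(A)` with `‖v‖ ≤ γ` can be
written as `v = A p` for some probability vector `p ∈ Δ`. -/
theorem stmt_4 {d n : ℕ} (hn : 0 < n) (a : Fin n → EuclideanSpace ℝ (Fin d))
    (γ : ℝ) (hγ : 0 ≤ γ)
    (hmargin : (⨆ w : {w : EuclideanSpace ℝ (Fin d) //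
        w ∈ Submodule.span ℝ (Set.range a) ∧ ‖w‖ = 1},
      ⨅ i : Fin n, (inner ℝ (w : EuclideanSpace ℝ (Fin d)) (a i) : ℝ)) ≤ -γ) :
    ∀ v : EuclideanSpace ℝ (Fin d), v ∈ Submodule.span ℝ (Set.range a) → ‖v‖ ≤ γ →
      ∃ p : Fin n → ℝ, (∀ i, 0 ≤ p i) ∧ ∑ i, p i = 1 ∧ v = ∑ i, p i • a i := by
  intro v hv hvγ
  haveI : Nonempty (Fin n) := ⟨⟨0, hn⟩⟩
  set K := Submodule.span ℝ (Set.range a) with hK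
  set T : Set (EuclideanSpace ℝ (Fin d)) := {x | ∃ p : Fin n → ℝ,
      (∀ i, 0 ≤ p i) ∧ ∑ i, p i = 1 ∧ x = ∑ i, p i • a i} with hT
  suffices hvc : v ∈ convexHull ℝ (Set.range a) by
    have hTconv : Convex ℝ T := by
      rintro x ⟨p, hp0, hp1, rfl⟩ y ⟨q, hq0, hq1, rfl⟩ s t hs ht hst
      refine ⟨fun i => s * p i + t * q i,
        fun i => add_nonneg (mul_nonneg hs (hp0 i)) (mul_nonneg ht (hq0 i)), ?_, ?_⟩
      · simp [Finset.sum_add_distrib, ← Finset.mul_sum, hp1, hq1, hst]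
      · rw [Finset.smul_sum, Finset.smul_sum, ← Finset.sum_add_distrib]
        refine Finset.sum_congr rfl fun i _ => ?_
        simp [add_smul, mul_smul]
    have hsub : Set.range a ⊆ T := by
      rintro x ⟨i, rfl⟩
      exact ⟨fun j => if j = i then 1 else 0,
        fun j => by by_cases h : j = i <;> simp [h], by simp, by simp⟩
    obtain ⟨p, h1, h2, h3⟩ := convexHull_min hsub hTconv hvc
    exact ⟨p, h1, h2, h3⟩
  by_contra hvc
  have hcomp : IsCompact (convexHull ℝ (Set.range a)) :=
    (Set.finite_range a).isCompact_convexHull ℝ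
  obtain ⟨f, u, hfs, hfv⟩ := geometric_hahn_banach_closed_point
    (convex_convexHull ℝ _) hcomp.isClosed hvc
  set w₀ : EuclideanSpace ℝ (Fin d) :=
    (InnerProductSpace.toDual ℝ (EuclideanSpace ℝ (Fin d))).symm f with hw₀
  have hrep : ∀ x : EuclideanSpace ℝ (Fin d), ⟪w₀, x⟫ = f x :=
    fun x => InnerProductSpace.toDual_symm_apply
  set w : EuclideanSpace ℝ (Fin d) := ((K.orthogonalProjection w₀ : K) : EuclideanSpace ℝ (Fin d)) with hwdef
  have hwK : w ∈ K := (K.orthogonalProjection w₀).2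
  have hproj : ∀ x ∈ K, ⟪w, x⟫ = f x := by
    intro x hx
    have horth := Submodule.sub_starProjection_mem_orthogonal (K := K) w₀
    have h0 : ⟪x, w₀ - w⟫ = 0 := (Submodule.mem_orthogonal K _).1 horth x hx
    have h1 : ⟪w₀, x⟫ - ⟪w, x⟫ = 0 := by
      rw [← inner_sub_left, real_inner_comm]; exact h0
    rw [← hrep x]; linarith
  have haiK : ∀ i, a i ∈ K := fun i => Submodule.subset_span ⟨i, rfl⟩
  have hai : ∀ i, ⟪w, a i⟫ < u := fun i => by
    rw [hproj _ (haiK i)]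
    exact hfs _ (subset_convexHull ℝ _ ⟨i, rfl⟩)
  have hwv : u < ⟪w, v⟫ := by rw [hproj _ hv]; exact hfv
  have hwne : w ≠ 0 := by
    intro h
    have h1 := hai ⟨0, hn⟩
    rw [h] at h1 hwv
    simp only [inner_zero_left] at h1 hwv
    exact absurd (h1.trans hwv) (lt_irrefl 0)
  have hwpos : (0:ℝ) < ‖w‖ := norm_pos_iff.mpr hwne
  set c : ℝ := ‖w‖ with hc
  set w1 : EuclideanSpace ℝ (Fin d) := -(c⁻¹ • w) with hw1def
  have hw1K : w1 ∈ K := K.neg_mem (K.smul_mem _ hwK)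
  have hw1norm : ‖w1‖ = 1 := by
    rw [hw1def, norm_neg, norm_smul, norm_inv, Real.norm_eq_abs, abs_of_pos hwpos]
    field_simp
    exact hc.symm
  have hlow : ∀ i, -(u / c) ≤ ⟪w1, a i⟫ := fun i => by
    rw [hw1def, inner_neg_left, real_inner_smul_left]
    have h2 := (hai i).le
    rw [neg_le_neg_iff, le_div_iff₀ hwpos]
    calc c⁻¹ * ⟪w, a i⟫ * c = ⟪w, a i⟫ := by field_simp
      _ ≤ u := h2
  have hu : u < c * γ :=
    calc u < ⟪w, v⟫ := hwv
      _ ≤ ‖w‖ * ‖v‖ := real_inner_le_norm w v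
      _ ≤ c * γ := mul_le_mul_of_nonneg_left hvγ (le_of_lt hwpos)
  have hkey : -γ < -(u / c) := by
    rw [neg_lt_neg_iff, div_lt_iff₀ hwpos, mul_comm]
    exact hu
  have hbddA : BddAbove (Set.range fun w : {w : EuclideanSpace ℝ (Fin d) //
      w ∈ K ∧ ‖w‖ = 1} => ⨅ i : Fin n, (⟪(w : EuclideanSpace ℝ (Fin d)), a i⟫ : ℝ)) := by
    refine ⟨‖a ⟨0, hn⟩‖, ?_⟩
    rintro x ⟨⟨w', hw'K, hw'n⟩, rfl⟩
    have h1 : (⨅ i : Fin n, (⟪w', a i⟫ : ℝ)) ≤ ⟪w', a ⟨0, hn⟩⟫ :=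
      ciInf_le (Set.Finite.bddBelow (Set.finite_range _)) _
    refine h1.trans ?_
    calc ⟪w', a ⟨0, hn⟩⟫ ≤ ‖w'‖ * ‖a ⟨0, hn⟩‖ := real_inner_le_norm _ _
      _ = ‖a ⟨0, hn⟩‖ := by rw [hw'n, one_mul]
  have hle : (⨅ i : Fin n, (⟪w1, a i⟫ : ℝ)) ≤ -γ :=
    le_trans (le_ciSup hbddA ⟨w1, hw1K, hw1norm⟩) hmargin
  have hge : -(u / c) ≤ ⨅ i : Fin n, (⟪w1, a i⟫ : ℝ) := le_ciInf hlow
  linarith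
end

section
/- Gordan's theorem with margin (part 2): for any A ∈ ℝ^{d×n} and any γ ≥ 0, either there exists a unit vector w ∈ lin(A) with ⟨w, a_i⟩ > γ for all i, or there exists p ∈ Δ with ‖Ap‖ ≤ γ, and these two alternatives cannot hold simultaneously. -/
open Finset

private lemma gordan_not_both {d n : ℕ} (a : Fin n → EuclideanSpace ℝ (Fin d)) (γ : ℝ)
    (hP : ∃ w : EuclideanSpace ℝ (Fin d), w ∈ Submodule.span ℝ (Set.range a) ∧ ‖w‖ = 1 ∧
        ∀ i, γ < (inner ℝ w (a i) : ℝ))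
    (hQ : ∃ p : Fin n → ℝ, (∀ i, 0 ≤ p i) ∧ ∑ i, p i = 1 ∧ ‖∑ i, p i • a i‖ ≤ γ) :
    False := by
  obtain ⟨w, -, hw1, hwγ⟩ := hP
  obtain ⟨p, hp0, hp1, hpγ⟩ := hQ
  have hex : ∃ i ∈ Finset.univ, 0 < p i := by
    by_contra h
    push_neg at h
    have : ∑ i, p i = 0 := Finset.sum_eq_zero fun i hi => le_antisymm (h i hi) (hp0 i)
    simp [hp1] at this
  obtain ⟨i0, -, hi0⟩ := hex
  have hlt : γ * ∑ i, p i < ∑ i, p i * (inner ℝ w (a i) : ℝ) := by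
    rw [Finset.mul_sum]
    refine Finset.sum_lt_sum (fun i _ => ?_) ⟨i0, Finset.mem_univ i0, ?_⟩
    · rw [mul_comm γ (p i)]
      exact mul_le_mul_of_nonneg_left (le_of_lt (hwγ i)) (hp0 i)
    · rw [mul_comm γ (p i0)]
      exact mul_lt_mul_of_pos_left (hwγ i0) hi0
  rw [hp1, mul_one] at hlt
  have h1 : (inner ℝ w (∑ i, p i • a i) : ℝ) = ∑ i, p i * (inner ℝ w (a i) : ℝ) := by
    rw [inner_sum]
    exact Finset.sum_congr rfl fun i _ => real_inner_smul_right _ _ _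
  have h2 : (inner ℝ w (∑ i, p i • a i) : ℝ) ≤ γ := by
    calc (inner ℝ w (∑ i, p i • a i) : ℝ) ≤ ‖w‖ * ‖∑ i, p i • a i‖ := real_inner_le_norm _ _
    _ ≤ γ := by rw [hw1, one_mul]; exact hpγ
  rw [h1] at h2
  exact absurd h2 (not_le.mpr hlt)

/-- Gordan's theorem with margin (part 2): for any `γ ≥ 0`, either there is a unit
vector `w ∈ lin(A)` with `⟪w, a i⟫ > γ` for all `i`, or there is `p ∈ Δ` with
`‖Ap‖ ≤ γ`, and the two alternatives cannot hold simultaneously. -/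
theorem stmt_5 {d n : ℕ} (hn : 0 < n) (a : Fin n → EuclideanSpace ℝ (Fin d))
    (γ : ℝ) (hγ : 0 ≤ γ) :
    Xor'
      (∃ w : EuclideanSpace ℝ (Fin d), w ∈ Submodule.span ℝ (Set.range a) ∧ ‖w‖ = 1 ∧
        ∀ i, γ < (inner ℝ w (a i) : ℝ))
      (∃ p : Fin n → ℝ, (∀ i, 0 ≤ p i) ∧ ∑ i, p i = 1 ∧ ‖∑ i, p i • a i‖ ≤ γ) := by
  classical
  set L : (Fin n → ℝ) →ₗ[ℝ] EuclideanSpace ℝ (Fin d) :=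
    { toFun := fun p => ∑ i, p i • a i
      map_add' := by intro x y; simp [add_smul, Finset.sum_add_distrib]
      map_smul' := by intro c x; simp [smul_smul, Finset.smul_sum] }
  set K : Set (EuclideanSpace ℝ (Fin d)) := L '' stdSimplex ℝ (Fin n) with hK
  have hKconv : Convex ℝ K := (convex_stdSimplex ℝ _).linear_image L
  have hKcomp : IsCompact K :=
    (isCompact_stdSimplex ℝ (Fin n)).image L.continuous_of_finiteDimensional
  have hsingle : ∀ i : Fin n, Pi.single i 1 ∈ stdSimplex ℝ (Fin n) := fun i =>
    ⟨fun j => by by_cases h : j = i <;> simp [Pi.single_apply, h], by simp⟩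
  have hKne : K.Nonempty := ⟨L (Pi.single ⟨0, hn⟩ 1), ⟨_, hsingle _, rfl⟩⟩
  obtain ⟨v, hvK, hv⟩ :=
    exists_norm_eq_iInf_of_complete_convex hKne hKcomp.isComplete hKconv 0
  have hchar := (norm_eq_iInf_iff_real_inner_le_zero hKconv hvK).mp hv
  obtain ⟨p, hpS, hpv⟩ := hvK
  by_cases hle : ‖v‖ ≤ γ
  · -- second alternative
    refine Or.inr ⟨⟨p, hpS.1, hpS.2, by rw [show ∑ i, p i • a i = v from hpv]; exact hle⟩,
      fun hP => gordan_not_both a γ hP ⟨p, hpS.1, hpS.2, by rw [show ∑ i, p i • a i = v from hpv]; exact hle⟩⟩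
  · push_neg at hle
    have hv0 : v ≠ 0 := fun h => by simp [h] at hle; exact absurd hle (not_lt.mpr hγ)
    have hvn : (0:ℝ) < ‖v‖ := norm_pos_iff.mpr hv0
    have hinner : ∀ i, ‖v‖ ^ 2 ≤ (inner ℝ v (a i) : ℝ) := by
      intro i
      have hai : a i ∈ K := ⟨Pi.single i 1, hsingle i, by
        show ∑ j, Pi.single i 1 j • a j = a i
        simp [Pi.single_apply, ite_smul]⟩
      have h' : (inner ℝ (0 - v) (a i - v) : ℝ) ≤ 0 := hchar (a i) hai
      rw [zero_sub, inner_sub_right, inner_neg_left, inner_neg_left] at h'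
      have hself : (inner ℝ v v : ℝ) = ‖v‖ ^ 2 := real_inner_self_eq_norm_sq v
      linarith
    have hmem : ‖v‖⁻¹ • v ∈ Submodule.span ℝ (Set.range a) := by
      refine Submodule.smul_mem _ _ ?_
      rw [← hpv]
      show ∑ i, p i • a i ∈ _
      exact Submodule.sum_mem _ fun i _ =>
        Submodule.smul_mem _ _ (Submodule.subset_span (Set.mem_range_self i))
    have hnorm : ‖‖v‖⁻¹ • v‖ = 1 := by
      rw [norm_smul, norm_inv, norm_norm, inv_mul_cancel₀ (ne_of_gt hvn)]
    have hip : ∀ i, γ < (inner ℝ (‖v‖⁻¹ • v) (a i) : ℝ) := by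
      intro i
      rw [real_inner_smul_left]
      have h1 := hinner i
      have h2 : ‖v‖ ≤ ‖v‖⁻¹ * (inner ℝ v (a i) : ℝ) := by
        have key := mul_le_mul_of_nonneg_left h1 (inv_nonneg.mpr hvn.le)
        have heq : ‖v‖⁻¹ * ‖v‖ ^ 2 = ‖v‖ := by
          rw [sq, ← mul_assoc, inv_mul_cancel₀ (ne_of_gt hvn), one_mul]
        linarith
      linarith
    exact Or.inl ⟨⟨‖v‖⁻¹ • v, hmem, hnorm, hip⟩,
      fun hQ => gordan_not_both a γ ⟨‖v‖⁻¹ • v, hmem, hnorm, hip⟩ hQ⟩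
end

section
/- Gordan's theorem with margin (part 3): for any A ∈ ℝ^{d×n} and any γ ≥ 0, either there exists a unit vector w ∈ lin(A) with ⟨w, a_i⟩ > −γ for all i, or every v ∈ lin(A) with ‖v‖ ≤ γ satisfies v = A p_v for some p_v ∈ Δ (i.e. the ball of radius γ in lin(A) is contained in conv(A)). -/
/-- Gordan's theorem with margin (part 3): for any `γ ≥ 0`, either there is a unit
vector `w ∈ lin(A)` with `⟪w, a i⟫ > -γ` for all `i`, or every `v ∈ lin(A)` with
`‖v‖ ≤ γ` is of the form `A p` for some `p ∈ Δ`. -/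
theorem stmt_6 {d n : ℕ} (hn : 0 < n) (a : Fin n → EuclideanSpace ℝ (Fin d))
    (γ : ℝ) (hγ : 0 ≤ γ) :
    (∃ w : EuclideanSpace ℝ (Fin d), w ∈ Submodule.span ℝ (Set.range a) ∧ ‖w‖ = 1 ∧
        ∀ i, -γ < (inner ℝ w (a i) : ℝ))
    ∨ (∀ v : EuclideanSpace ℝ (Fin d), v ∈ Submodule.span ℝ (Set.range a) → ‖v‖ ≤ γ →
        ∃ p : Fin n → ℝ, (∀ i, 0 ≤ p i) ∧ ∑ i, p i = 1 ∧ v = ∑ i, p i • a i) := by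
  by_cases h2 : ∀ v : EuclideanSpace ℝ (Fin d), v ∈ Submodule.span ℝ (Set.range a) → ‖v‖ ≤ γ →
      ∃ p : Fin n → ℝ, (∀ i, 0 ≤ p i) ∧ ∑ i, p i = 1 ∧ v = ∑ i, p i • a i
  · exact Or.inr h2
  left
  push_neg at h2
  obtain ⟨v, hvspan, hvnorm, hvK⟩ := h2
  -- The convex hull as image of the standard simplex
  set f : (Fin n → ℝ) → EuclideanSpace ℝ (Fin d) := fun p => ∑ i, p i • a i with hf
  have hflin : IsLinearMap ℝ f := by
    constructor
    · intro p q
      simp [hf, add_smul, Finset.sum_add_distrib]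
    · intro c p
      simp [hf, Finset.smul_sum, smul_smul]
  set K : Set (EuclideanSpace ℝ (Fin d)) := f '' stdSimplex ℝ (Fin n) with hK
  have hKconv : Convex ℝ K := (convex_stdSimplex ℝ (Fin n)).is_linear_image hflin
  have hKcompact : IsCompact K := by
    apply (isCompact_stdSimplex ℝ (Fin n)).image
    exact continuous_finset_sum _ fun i _ => (continuous_apply i).smul continuous_const
  have hKclosed : IsClosed K := hKcompact.isClosed
  have hKne : K.Nonempty := by
    refine ⟨f (fun _ => (n : ℝ)⁻¹), Set.mem_image_of_mem _ ?_⟩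
    constructor
    · intro i; positivity
    · simp [Finset.sum_const, Finset.card_univ]
      field_simp
  have hvK' : v ∉ K := by
    intro hv
    obtain ⟨p, hp, hpv⟩ := hv
    exact hvK p hp.1 hp.2 hpv.symm
  -- orthogonal projection of v onto K
  obtain ⟨u, huK, hu⟩ := exists_norm_eq_iInf_of_complete_convex hKne
    (hKclosed.isComplete) hKconv v
  have hproj : ∀ x ∈ K, (inner ℝ (v - u) (x - u) : ℝ) ≤ 0 :=
    (norm_eq_iInf_iff_real_inner_le_zero hKconv huK).mp hu
  have huspan : u ∈ Submodule.span ℝ (Set.range a) := by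
    obtain ⟨p, hp, hpu⟩ := huK
    rw [← hpu]
    exact Submodule.sum_mem _ fun i _ =>
      Submodule.smul_mem _ _ (Submodule.subset_span ⟨i, rfl⟩)
  set w0 : EuclideanSpace ℝ (Fin d) := u - v with hw0
  have hw0ne : w0 ≠ 0 := by
    intro h
    apply hvK'
    have : u = v := by rwa [hw0, sub_eq_zero] at h
    rwa [this] at huK
  have hw0pos : 0 < ‖w0‖ := norm_pos_iff.mpr hw0ne
  refine ⟨‖w0‖⁻¹ • w0, ?_, ?_, ?_⟩
  · exact Submodule.smul_mem _ _ (Submodule.sub_mem _ huspan hvspan)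
  · rw [norm_smul, norm_inv, norm_norm, inv_mul_cancel₀ hw0pos.ne']
  · intro i
    have haiK : a i ∈ K := by
      refine ⟨fun j => if j = i then 1 else 0, ⟨fun j => by positivity, by simp⟩, ?_⟩
      simp [hf, Finset.sum_ite_eq']
    have h1 : (inner ℝ (v - u) (a i - u) : ℝ) ≤ 0 := hproj _ haiK
    have h2 : (0:ℝ) ≤ inner ℝ w0 (a i - u) := by
      have : (inner ℝ (v - u) (a i - u) : ℝ) = - inner ℝ w0 (a i - u) := by
        rw [hw0, ← inner_neg_left]; congr 1; abel
      linarith [this ▸ h1]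
    have h3 : (inner ℝ w0 u : ℝ) = inner ℝ w0 v + ‖w0‖ ^ 2 := by
      have : (inner ℝ w0 u : ℝ) = inner ℝ w0 (v + w0) := by
        congr 1; rw [hw0]; abel
      rw [this, inner_add_right, real_inner_self_eq_norm_sq]
    have h4 : (inner ℝ w0 v : ℝ) ≥ -(‖w0‖ * γ) := by
      have := abs_real_inner_le_norm w0 v
      have h5 : ‖w0‖ * ‖v‖ ≤ ‖w0‖ * γ := by
        apply mul_le_mul_of_nonneg_left hvnorm hw0pos.le
      have := neg_abs_le (inner ℝ w0 v : ℝ)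
      nlinarith [abs_real_inner_le_norm w0 v]
    have h6 : (inner ℝ w0 (a i) : ℝ) > -(‖w0‖ * γ) := by
      have hexp : (inner ℝ w0 (a i) : ℝ) = inner ℝ w0 (a i - u) + inner ℝ w0 u := by
        rw [inner_sub_right]; ring
      rw [hexp, h3]
      nlinarith
    rw [real_inner_smul_left]
    calc -γ = ‖w0‖⁻¹ * (-(‖w0‖ * γ)) := by field_simp
      _ < ‖w0‖⁻¹ * inner ℝ w0 (a i) := by
          exact mul_lt_mul_of_pos_left h6 (inv_pos.mpr hw0pos)
end

section
/- Hoffman-type theorem for the dual system: let A ∈ ℝ^{m×n} with affine margin ρ_A and assume ρ_A < 0; set μ := |ρ_A|. Fix b ∈ ℝ^m and let W = {x ≥ 0 : A x = b}. If W is nonempty, then for every x ≥ 0, dist₁(x, W) ≤ ‖Ax − b‖ / μ, where dist₁ is distance in the ℓ¹ norm and ‖·‖ is the Euclidean norm. -/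
open Finset

lemma key_conv {m n : ℕ} (hn : 0 < n) (a : Fin n → EuclideanSpace ℝ (Fin m))
    (μ : ℝ) (hμ : 0 < μ)
    (hmargin : (⨆ w : {w : EuclideanSpace ℝ (Fin m) //
        w ∈ Submodule.span ℝ (Set.range a) ∧ ‖w‖ = 1},
      ⨅ i : Fin n, (inner ℝ (w : EuclideanSpace ℝ (Fin m)) (a i) : ℝ)) = -μ)
    (v : EuclideanSpace ℝ (Fin m)) (hv : v ∈ Submodule.span ℝ (Set.range a))
    (hvn : ‖v‖ ≤ μ) :
    ∃ lam : Fin n → ℝ, (∀ i, 0 ≤ lam i) ∧ ∑ i, lam i = 1 ∧ ∑ i, lam i • a i = v := by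
  classical
  haveI : Nonempty (Fin n) := ⟨⟨0, hn⟩⟩
  have haK : ∀ i, a i ∈ Submodule.span ℝ (Set.range a) :=
    fun i => Submodule.subset_span ⟨i, rfl⟩
  have hhull : v ∈ convexHull ℝ (Set.range a) := by
    by_contra hnot
    obtain ⟨f, u, hfv, hfa⟩ := geometric_hahn_banach_point_closed
      (convex_convexHull ℝ _) ((Set.finite_range a).isClosed_convexHull (𝕜 := ℝ)) hnot
    set w : EuclideanSpace ℝ (Fin m) :=
      (InnerProductSpace.toDual ℝ (EuclideanSpace ℝ (Fin m))).symm f with hw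
    have hwip : ∀ y : EuclideanSpace ℝ (Fin m), (inner ℝ w y : ℝ) = f y := fun y =>
      InnerProductSpace.toDual_symm_apply
    set w' : EuclideanSpace ℝ (Fin m) :=
      (Submodule.orthogonalProjection (Submodule.span ℝ (Set.range a)) w : EuclideanSpace ℝ (Fin m)) with hw'
    have hproj : ∀ p ∈ Submodule.span ℝ (Set.range a), (inner ℝ w' p : ℝ) = inner ℝ w p := by
      intro p hp
      have h0 : (inner ℝ p (w - w') : ℝ) = 0 :=
        Submodule.inner_right_of_mem_orthogonal hp
          (Submodule.sub_starProjection_mem_orthogonal (K := Submodule.span ℝ (Set.range a)) w)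
      rw [inner_sub_right] at h0
      have h1 := real_inner_comm p w
      have h2 := real_inner_comm p w'
      linarith
    have hav : ∀ i, (inner ℝ w' (a i) : ℝ) > u := by
      intro i
      rw [hproj _ (haK i), hwip]
      exact hfa _ (subset_convexHull ℝ _ ⟨i, rfl⟩)
    have hvv : (inner ℝ w' v : ℝ) < u := by
      rw [hproj _ hv, hwip]; exact hfv
    have hw'ne : w' ≠ 0 := by
      intro h0
      have h1 := hav ⟨0, hn⟩
      have h2 := hvv
      rw [h0, inner_zero_left] at h1 h2
      linarith
    have hc : (0:ℝ) < ‖w'‖ := norm_pos_iff.mpr hw'ne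
    set z : EuclideanSpace ℝ (Fin m) := ‖w'‖⁻¹ • w' with hz
    have hzK : z ∈ Submodule.span ℝ (Set.range a) :=
      Submodule.smul_mem _ _ (Submodule.orthogonalProjection (Submodule.span ℝ (Set.range a)) w).2
    have hzn : ‖z‖ = 1 := norm_smul_inv_norm hw'ne
    have hbdd : BddAbove (Set.range fun w : {w : EuclideanSpace ℝ (Fin m) //
        w ∈ Submodule.span ℝ (Set.range a) ∧ ‖w‖ = 1} =>
      ⨅ i : Fin n, (inner ℝ (w : EuclideanSpace ℝ (Fin m)) (a i) : ℝ)) := by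
      refine ⟨‖a ⟨0, hn⟩‖, ?_⟩
      rintro _ ⟨w, rfl⟩
      refine le_trans (ciInf_le (Set.Finite.bddBelow (Set.finite_range _)) ⟨0, hn⟩) ?_
      calc (inner ℝ (w : EuclideanSpace ℝ (Fin m)) (a ⟨0, hn⟩) : ℝ)
          ≤ ‖(w : EuclideanSpace ℝ (Fin m))‖ * ‖a ⟨0, hn⟩‖ := real_inner_le_norm _ _
        _ = ‖a ⟨0, hn⟩‖ := by rw [w.2.2, one_mul]
    have hle : (⨅ i : Fin n, (inner ℝ z (a i) : ℝ)) ≤ -μ := by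
      rw [← hmargin]
      exact le_ciSup hbdd ⟨z, hzK, hzn⟩
    have hzu : ∀ i, ‖w'‖⁻¹ * u < (inner ℝ z (a i) : ℝ) := by
      intro i
      rw [hz, inner_smul_left]
      simp only [RCLike.conj_to_real]
      exact mul_lt_mul_of_pos_left (hav i) (inv_pos.mpr hc)
    have hge : ‖w'‖⁻¹ * u ≤ ⨅ i : Fin n, (inner ℝ z (a i) : ℝ) :=
      le_ciInf fun i => (hzu i).le
    have hzv : (inner ℝ z v : ℝ) < ‖w'‖⁻¹ * u := by
      rw [hz, inner_smul_left]
      simp only [RCLike.conj_to_real]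
      exact mul_lt_mul_of_pos_left hvv (inv_pos.mpr hc)
    have hcs : -μ ≤ (inner ℝ z v : ℝ) := by
      have h2 := abs_real_inner_le_norm z v
      rw [hzn, one_mul] at h2
      have h3 := neg_abs_le (inner ℝ z v : ℝ)
      linarith
    linarith
  obtain ⟨ι, _inst, w, z, hw0, hw1, hzr, hsum⟩ :=
    mem_convexHull_iff_exists_fintype.mp hhull
  choose j hj using fun i => hzr i
  refine ⟨fun k => ∑ i ∈ Finset.univ.filter (fun i => j i = k), w i,
    fun k => Finset.sum_nonneg fun i _ => hw0 i, ?_, ?_⟩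
  · rw [Finset.sum_fiberwise_of_maps_to (fun i _ => Finset.mem_univ (j i))]
    exact hw1
  · calc ∑ k, (∑ i ∈ Finset.univ.filter (fun i => j i = k), w i) • a k
        = ∑ k, ∑ i ∈ Finset.univ.filter (fun i => j i = k), w i • a (j i) := by
          refine Finset.sum_congr rfl fun k _ => ?_
          rw [Finset.sum_smul]
          refine Finset.sum_congr rfl fun i hi => ?_
          rw [(Finset.mem_filter.mp hi).2]
      _ = ∑ i, w i • a (j i) :=
          Finset.sum_fiberwise_of_maps_to (fun i _ => Finset.mem_univ (j i)) _
      _ = v := by simp_rw [hj]; exact hsum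



/-- Hoffman-type theorem for the dual system: if the affine margin is `-μ < 0`,
`W = {x ≥ 0 : Ax = b}` is nonempty, then for every `x ≥ 0`,
`dist₁(x, W) ≤ ‖Ax - b‖ / μ`. -/
theorem stmt_8 {m n : ℕ} (hn : 0 < n) (a : Fin n → EuclideanSpace ℝ (Fin m))
    (μ : ℝ) (hμ : 0 < μ)
    (hmargin : (⨆ w : {w : EuclideanSpace ℝ (Fin m) //
        w ∈ Submodule.span ℝ (Set.range a) ∧ ‖w‖ = 1},
      ⨅ i : Fin n, (inner ℝ (w : EuclideanSpace ℝ (Fin m)) (a i) : ℝ)) = -μ)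
    (b : EuclideanSpace ℝ (Fin m))
    (W : Set (Fin n → ℝ))
    (hW : W = {x | (∀ i, 0 ≤ x i) ∧ ∑ i, x i • a i = b})
    (hWne : W.Nonempty) :
    ∀ x : Fin n → ℝ, (∀ i, 0 ≤ x i) →
      sInf {r : ℝ | ∃ y ∈ W, r = ∑ i, |x i - y i|} ≤ ‖(∑ i, x i • a i) - b‖ / μ := by
  intro x hx
  have hbK : b ∈ Submodule.span ℝ (Set.range a) := by
    obtain ⟨y0, hy0⟩ := hWne
    rw [hW] at hy0
    rw [← hy0.2]
    exact Submodule.sum_mem _ fun i _ =>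
      Submodule.smul_mem _ _ (Submodule.subset_span ⟨i, rfl⟩)
  have hbdd : BddBelow {r : ℝ | ∃ y ∈ W, r = ∑ i, |x i - y i|} := by
    refine ⟨0, ?_⟩
    rintro r ⟨y, _, rfl⟩
    exact Finset.sum_nonneg fun i _ => abs_nonneg _
  set r : EuclideanSpace ℝ (Fin m) := (∑ i, x i • a i) - b with hr
  by_cases hr0 : r = 0
  · have hxW : x ∈ W := by
      rw [hW]
      exact ⟨hx, by rwa [sub_eq_zero] at hr0⟩
    have h0 : (0:ℝ) ∈ {r : ℝ | ∃ y ∈ W, r = ∑ i, |x i - y i|} :=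
      ⟨x, hxW, by simp⟩
    calc sInf {r : ℝ | ∃ y ∈ W, r = ∑ i, |x i - y i|} ≤ 0 := csInf_le hbdd h0
      _ ≤ ‖(∑ i, x i • a i) - b‖ / μ := div_nonneg (norm_nonneg _) hμ.le
  · have hrn : (0:ℝ) < ‖r‖ := norm_pos_iff.mpr hr0
    have hrK : r ∈ Submodule.span ℝ (Set.range a) := by
      rw [hr]
      exact Submodule.sub_mem _ (Submodule.sum_mem _ fun i _ =>
        Submodule.smul_mem _ _ (Submodule.subset_span ⟨i, rfl⟩)) hbK
    set v : EuclideanSpace ℝ (Fin m) := (-(μ / ‖r‖)) • r with hv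
    have hvK : v ∈ Submodule.span ℝ (Set.range a) := Submodule.smul_mem _ _ hrK
    have hvn : ‖v‖ ≤ μ := by
      rw [hv, norm_smul, Real.norm_eq_abs, abs_neg, abs_div, abs_of_pos hμ,
        abs_of_pos hrn, div_mul_cancel₀ _ hrn.ne']
    obtain ⟨lam, hlam0, hlam1, hlamv⟩ := key_conv hn a μ hμ hmargin v hvK hvn
    set c : ℝ := ‖r‖ / μ with hc
    have hcpos : 0 < c := div_pos hrn hμ
    set y : Fin n → ℝ := fun i => x i + c * lam i with hy
    have hyW : y ∈ W := by
      rw [hW]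
      refine ⟨fun i => add_nonneg (hx i) (mul_nonneg hcpos.le (hlam0 i)), ?_⟩
      have : ∑ i, y i • a i = (∑ i, x i • a i) + c • ∑ i, lam i • a i := by
        rw [Finset.smul_sum, ← Finset.sum_add_distrib]
        refine Finset.sum_congr rfl fun i _ => ?_
        rw [hy, add_smul, smul_smul]
      rw [this, hlamv, hv, smul_smul, hc]
      have : ‖r‖ / μ * -(μ / ‖r‖) = -1 := by
        field_simp
      rw [this, neg_one_smul, hr]
      abel
    have hmem : c ∈ {s : ℝ | ∃ y ∈ W, s = ∑ i, |x i - y i|} := by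
      refine ⟨y, hyW, ?_⟩
      have : ∀ i, |x i - y i| = c * lam i := by
        intro i
        have h4 : x i - y i = -(c * lam i) := by rw [hy]; ring
        rw [h4, abs_neg, abs_of_nonneg (mul_nonneg hcpos.le (hlam0 i))]
      rw [Finset.sum_congr rfl fun i _ => this i, ← Finset.mul_sum, hlam1, mul_one]
    exact csInf_le hbdd hmem
end

section
/- Hoffman-type theorem on the simplex: let A ∈ ℝ^{m×n} with |ρ_A⁻| = μ > 0 and define W = {p ∈ Δ : A p = 0}. Then for every p ∈ Δ, dist₁(p, W) ≤ 2‖Ap‖ / (‖Ap‖ + μ) ≤ 2‖Ap‖ / μ. -/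
open scoped RealInnerProductSpace in
lemma ball_covered {m n : ℕ} (hn : 0 < n) (a : Fin n → EuclideanSpace ℝ (Fin m))
    (μ : ℝ) (hμ : 0 < μ)
    (hmargin : (⨆ w : {w : EuclideanSpace ℝ (Fin m) //
        w ∈ Submodule.span ℝ (Set.range a) ∧ ‖w‖ = 1},
      ⨅ i : Fin n, (inner ℝ (w : EuclideanSpace ℝ (Fin m)) (a i) : ℝ)) = -μ)
    (v : EuclideanSpace ℝ (Fin m)) (hvmem : v ∈ Submodule.span ℝ (Set.range a))
    (hvn : ‖v‖ ≤ μ) :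
    ∃ p : Fin n → ℝ, (∀ i, 0 ≤ p i) ∧ ∑ i, p i = 1 ∧ ∑ i, p i • a i = v := by
  by_contra hcon
  push_neg at hcon
  set L : (Fin n → ℝ) →ₗ[ℝ] EuclideanSpace ℝ (Fin m) :=
    ∑ i : Fin n, (LinearMap.proj i : (Fin n → ℝ) →ₗ[ℝ] ℝ).smulRight (a i) with hL
  have hLapp : ∀ p : Fin n → ℝ, L p = ∑ i, p i • a i := by
    intro p; simp [hL, LinearMap.sum_apply]
  have hvC : v ∉ L '' stdSimplex ℝ (Fin n) := by
    rintro ⟨p, ⟨hp1, hp2⟩, hp3⟩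
    exact hcon p hp1 hp2 ((hLapp p).symm.trans hp3)
  have hconv : Convex ℝ (L '' stdSimplex ℝ (Fin n)) :=
    (convex_stdSimplex ℝ _).linear_image L
  have hclosed : IsClosed (L '' stdSimplex ℝ (Fin n)) :=
    ((isCompact_stdSimplex ℝ _).image L.continuous_of_finiteDimensional).isClosed
  obtain ⟨f, u, hfv, hfC⟩ := geometric_hahn_banach_point_closed hconv hclosed hvC
  have haiC : ∀ i, a i ∈ L '' stdSimplex ℝ (Fin n) := by
    intro i
    refine ⟨Pi.single i 1, ⟨fun j => ?_, by simp⟩, ?_⟩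
    · by_cases h : j = i <;> simp [Pi.single_apply, h]
    · rw [hLapp]; simp [Pi.single_apply]
  set w : EuclideanSpace ℝ (Fin m) := (InnerProductSpace.toDual ℝ _).symm f with hw
  have hwapp : ∀ y : EuclideanSpace ℝ (Fin m), ⟪w, y⟫ = f y :=
    fun y => InnerProductSpace.toDual_symm_apply
  set K := Submodule.span ℝ (Set.range a) with hK
  set w' : EuclideanSpace ℝ (Fin m) := (K.starProjection w : EuclideanSpace ℝ (Fin m)) with hw'
  have hproj : ∀ y ∈ K, ⟪w', y⟫ = ⟪w, y⟫ := by
    intro y hy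
    have := Submodule.starProjection_inner_eq_zero w y hy
    rw [inner_sub_left] at this
    linarith [this]
  have haiK : ∀ i, a i ∈ K := fun i => Submodule.subset_span ⟨i, rfl⟩
  have hai : ∀ i, u < ⟪w', a i⟫ := fun i => by
    rw [hproj _ (haiK i), hwapp]; exact hfC _ (haiC i)
  have hvlt : ⟪w', v⟫ < u := by rw [hproj _ hvmem, hwapp]; exact hfv
  have hw'ne : w' ≠ 0 := by
    intro h
    have h1 := hai ⟨0, hn⟩
    have h2 := hvlt
    rw [h] at h1 h2
    simp only [inner_zero_left] at h1 h2
    linarith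
  have hw'pos : 0 < ‖w'‖ := norm_pos_iff.mpr hw'ne
  set z : EuclideanSpace ℝ (Fin m) := ‖w'‖⁻¹ • w' with hz
  have hzmem : z ∈ K := K.smul_mem _ (K.orthogonalProjectionOnto w).2
  have hznorm : ‖z‖ = 1 := by
    rw [hz, norm_smul, norm_inv, norm_norm, inv_mul_cancel₀ hw'pos.ne']
  have hkey : ∀ i, -μ < ⟪z, a i⟫ := by
    intro i
    have h1 : ⟪z, v⟫ < ⟪z, a i⟫ := by
      rw [hz, real_inner_smul_left, real_inner_smul_left]
      exact mul_lt_mul_of_pos_left (hvlt.trans (hai i)) (inv_pos.mpr hw'pos)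
    have h2 : -μ ≤ ⟪z, v⟫ := by
      have h3 := real_inner_le_norm z (-v)
      rw [inner_neg_right, hznorm, one_mul, norm_neg] at h3
      linarith
    linarith
  haveI : Nonempty (Fin n) := ⟨⟨0, hn⟩⟩
  have hbdd : BddAbove (Set.range fun w : {w : EuclideanSpace ℝ (Fin m) //
      w ∈ Submodule.span ℝ (Set.range a) ∧ ‖w‖ = 1} =>
      ⨅ i : Fin n, (inner ℝ (w : EuclideanSpace ℝ (Fin m)) (a i) : ℝ)) := by
    refine ⟨‖a ⟨0, hn⟩‖, ?_⟩
    rintro r ⟨⟨w₀, hw₀K, hw₀n⟩, rfl⟩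
    refine (ciInf_le (Set.finite_range _).bddBelow ⟨0, hn⟩).trans ?_
    have := real_inner_le_norm w₀ (a ⟨0, hn⟩)
    rw [hw₀n, one_mul] at this
    exact this
  have hle : (⨅ i : Fin n, (⟪z, a i⟫ : ℝ)) ≤ -μ := by
    have := le_ciSup hbdd (⟨z, hzmem, hznorm⟩ : {w : EuclideanSpace ℝ (Fin m) //
      w ∈ Submodule.span ℝ (Set.range a) ∧ ‖w‖ = 1})
    rw [hmargin] at this
    exact this
  obtain ⟨i₀, hi₀⟩ := Finite.exists_min (fun i : Fin n => (⟪z, a i⟫ : ℝ))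
  exact absurd (le_trans (le_ciInf hi₀) hle) (not_le.mpr (hkey i₀))

theorem stmt_9_aux {m n : ℕ} (hn : 0 < n) (a : Fin n → EuclideanSpace ℝ (Fin m))
    (μ : ℝ) (hμ : 0 < μ)
    (hmargin : (⨆ w : {w : EuclideanSpace ℝ (Fin m) //
        w ∈ Submodule.span ℝ (Set.range a) ∧ ‖w‖ = 1},
      ⨅ i : Fin n, (inner ℝ (w : EuclideanSpace ℝ (Fin m)) (a i) : ℝ)) = -μ)
    (W : Set (Fin n → ℝ))
    (hW : W = {q | (∀ i, 0 ≤ q i) ∧ ∑ i, q i = 1 ∧ ∑ i, q i • a i = 0})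
    (hbc : ∀ v : EuclideanSpace ℝ (Fin m), v ∈ Submodule.span ℝ (Set.range a) → ‖v‖ ≤ μ →
      ∃ p : Fin n → ℝ, (∀ i, 0 ≤ p i) ∧ ∑ i, p i = 1 ∧ ∑ i, p i • a i = v) :
    ∀ p : Fin n → ℝ, (∀ i, 0 ≤ p i) → ∑ i, p i = 1 →
      sInf {r : ℝ | ∃ q ∈ W, r = ∑ i, |p i - q i|}
          ≤ 2 * ‖∑ i, p i • a i‖ / (‖∑ i, p i • a i‖ + μ)
      ∧ 2 * ‖∑ i, p i • a i‖ / (‖∑ i, p i • a i‖ + μ)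
          ≤ 2 * ‖∑ i, p i • a i‖ / μ := by
  intro p hp hps
  set v : EuclideanSpace ℝ (Fin m) := ∑ i, p i • a i with hv
  set t : ℝ := ‖v‖ with ht
  have htnn : 0 ≤ t := norm_nonneg v
  have hμt : 0 < μ + t := by linarith
  have hSbdd : BddBelow {r : ℝ | ∃ q ∈ W, r = ∑ i, |p i - q i|} := by
    refine ⟨0, ?_⟩
    rintro r ⟨q, hq, rfl⟩
    exact Finset.sum_nonneg fun i _ => abs_nonneg _
  constructor
  · by_cases hv0 : v = 0
    · have hpW : p ∈ W := by rw [hW]; exact ⟨hp, hps, hv0⟩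
      have h0 : (0 : ℝ) ∈ {r : ℝ | ∃ q ∈ W, r = ∑ i, |p i - q i|} :=
        ⟨p, hpW, by simp⟩
      have := csInf_le hSbdd h0
      refine this.trans ?_
      positivity
    · have htpos : 0 < t := norm_pos_iff.mpr hv0
      have hvmem : v ∈ Submodule.span ℝ (Set.range a) :=
        Submodule.sum_mem _ fun i _ =>
          Submodule.smul_mem _ _ (Submodule.subset_span ⟨i, rfl⟩)
      have humem : -((μ / t) • v) ∈ Submodule.span ℝ (Set.range a) :=
        Submodule.neg_mem _ (Submodule.smul_mem _ _ hvmem)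
      have hun : ‖-((μ / t) • v)‖ ≤ μ := by
        rw [norm_neg, norm_smul, Real.norm_eq_abs, abs_of_pos (by positivity), ← ht,
          div_mul_cancel₀ _ htpos.ne']
      obtain ⟨p', hp'0, hp's, hp'e⟩ := hbc _ humem hun
      set q : Fin n → ℝ := fun i => (μ * p i + t * p' i) / (μ + t) with hq
      have hqW : q ∈ W := by
        rw [hW]
        refine ⟨fun i => div_nonneg (add_nonneg (mul_nonneg hμ.le (hp i)) (mul_nonneg htnn (hp'0 i))) hμt.le, ?_, ?_⟩
        · rw [hq]
          simp only
          rw [← Finset.sum_div, Finset.sum_add_distrib, ← Finset.mul_sum, ← Finset.mul_sum,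
            hps, hp's, mul_one, mul_one, div_self hμt.ne']
        · have hterm : ∀ i, q i • a i = (μ + t)⁻¹ • (μ • (p i • a i) + t • (p' i • a i)) := by
            intro i
            rw [hq]
            simp only
            rw [div_eq_inv_mul]
            module
          rw [Finset.sum_congr rfl fun i _ => hterm i, ← Finset.smul_sum,
            Finset.sum_add_distrib, ← Finset.smul_sum, ← Finset.smul_sum, ← hv, hp'e]
          rw [smul_neg, smul_smul, mul_div_cancel₀ _ htpos.ne', add_neg_cancel, smul_zero]
      have hrmem : (∑ i, |p i - q i|) ∈ {r : ℝ | ∃ q ∈ W, r = ∑ i, |p i - q i|} :=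
        ⟨q, hqW, rfl⟩
      refine (csInf_le hSbdd hrmem).trans ?_
      have hdiff : ∀ i, |p i - q i| = (t / (μ + t)) * |p i - p' i| := by
        intro i
        have : p i - q i = (t / (μ + t)) * (p i - p' i) := by
          rw [hq]; field_simp; ring
        rw [this, abs_mul, abs_of_pos (by positivity)]
      calc ∑ i, |p i - q i| = (t / (μ + t)) * ∑ i, |p i - p' i| := by
            rw [Finset.mul_sum]; exact Finset.sum_congr rfl fun i _ => hdiff i
        _ ≤ (t / (μ + t)) * 2 := by
            refine mul_le_mul_of_nonneg_left ?_ (by positivity)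
            calc ∑ i, |p i - p' i| ≤ ∑ i, (p i + p' i) := by
                  refine Finset.sum_le_sum fun i _ => ?_
                  calc |p i - p' i| ≤ |p i| + |p' i| := abs_sub _ _
                    _ = p i + p' i := by rw [abs_of_nonneg (hp i), abs_of_nonneg (hp'0 i)]
              _ = 2 := by rw [Finset.sum_add_distrib, hps, hp's]; norm_num
        _ = 2 * t / (t + μ) := by ring
  · gcongr
    case hdb => linarith
    all_goals positivity

/-- Hoffman-type theorem on the simplex: if the affine margin is `-μ < 0` and
`W = {p ∈ Δ : Ap = 0}`, then for every `p ∈ Δ`,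
`dist₁(p, W) ≤ 2‖Ap‖/(‖Ap‖ + μ) ≤ 2‖Ap‖/μ`. -/
theorem stmt_9 {m n : ℕ} (hn : 0 < n) (a : Fin n → EuclideanSpace ℝ (Fin m))
    (μ : ℝ) (hμ : 0 < μ)
    (hmargin : (⨆ w : {w : EuclideanSpace ℝ (Fin m) //
        w ∈ Submodule.span ℝ (Set.range a) ∧ ‖w‖ = 1},
      ⨅ i : Fin n, (inner ℝ (w : EuclideanSpace ℝ (Fin m)) (a i) : ℝ)) = -μ)
    (W : Set (Fin n → ℝ))
    (hW : W = {q | (∀ i, 0 ≤ q i) ∧ ∑ i, q i = 1 ∧ ∑ i, q i • a i = 0}) :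
    ∀ p : Fin n → ℝ, (∀ i, 0 ≤ p i) → ∑ i, p i = 1 →
      sInf {r : ℝ | ∃ q ∈ W, r = ∑ i, |p i - q i|}
          ≤ 2 * ‖∑ i, p i • a i‖ / (‖∑ i, p i • a i‖ + μ)
      ∧ 2 * ‖∑ i, p i • a i‖ / (‖∑ i, p i • a i‖ + μ)
          ≤ 2 * ‖∑ i, p i • a i‖ / μ := by
  exact stmt_9_aux hn a μ hμ hmargin W hW (ball_covered hn a μ hμ hmargin)
end

section
/- Subgradient bound and strong-convexity recursion for Normalized Perceptron: let L(w) = ½‖w‖² − min_i ⟨w,a_i⟩ with unit-norm a_i and minimizer ρw*. If w_t = Aα_t with α_t ∈ Δ and g_t = w_t − a_{i(t)} where a_{i(t)} achieves min_i ⟨w_t, a_i⟩, then ‖g_t‖ ≤ 2 and ⟨g_t, w_t − ρw*⟩ ≥ ‖w_t − ρw*‖², and consequently for w_{t+1} = w_t − g_t/(t+1): ‖w_{t+1} − ρw*‖² ≤ (1 − 2/(t+1))‖w_t − ρw*‖² + 4/(t+1)². -/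
set_option maxHeartbeats 800000 in
/-- Subgradient bound and strong-convexity recursion for the Normalized Perceptron:
`‖g‖ ≤ 2`, `⟪g, w − ρw*⟫ ≥ ‖w − ρw*‖²`, and the one-step recursion for
`w' = w − g/(t+1)`. -/
theorem stmt_15 {d n : ℕ} (hn : 0 < n) (a : Fin n → EuclideanSpace ℝ (Fin d))
    (ha : ∀ i, ‖a i‖ = 1)
    (ρ : ℝ) (hρpos : 0 < ρ)
    (wstar : EuclideanSpace ℝ (Fin d)) (hwstar : ‖wstar‖ = 1)
    (hattain : (⨅ i : Fin n, (inner ℝ wstar (a i) : ℝ)) = ρ)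
    (hopt : ∀ u : EuclideanSpace ℝ (Fin d), ‖u‖ = 1 →
      (⨅ i : Fin n, (inner ℝ u (a i) : ℝ)) ≤ ρ)
    (α : Fin n → ℝ) (hα0 : ∀ i, 0 ≤ α i) (hα1 : ∑ i, α i = 1)
    (w : EuclideanSpace ℝ (Fin d)) (hwa : w = ∑ i, α i • a i)
    (j : Fin n) (hj : ∀ i, (inner ℝ w (a j) : ℝ) ≤ (inner ℝ w (a i) : ℝ))
    (g : EuclideanSpace ℝ (Fin d)) (hg : g = w - a j)
    (t : ℕ) :
    ‖g‖ ≤ 2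
    ∧ ‖w - ρ • wstar‖ ^ 2 ≤ (inner ℝ g (w - ρ • wstar) : ℝ)
    ∧ ‖(w - (1 / ((t : ℝ) + 1)) • g) - ρ • wstar‖ ^ 2
        ≤ (1 - 2 / ((t : ℝ) + 1)) * ‖w - ρ • wstar‖ ^ 2 + 4 / ((t : ℝ) + 1) ^ 2 := by
  haveI : Nonempty (Fin n) := ⟨⟨0, hn⟩⟩
  -- ‖w‖ ≤ 1
  have hwnorm : ‖w‖ ≤ 1 := by
    rw [hwa]
    calc ‖∑ i, α i • a i‖ ≤ ∑ i, ‖α i • a i‖ := norm_sum_le _ _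
      _ = ∑ i, α i := by
          refine Finset.sum_congr rfl fun i _ => ?_
          rw [norm_smul, ha i, mul_one, Real.norm_eq_abs, abs_of_nonneg (hα0 i)]
      _ = 1 := hα1
  -- ρ ≤ ⟪wstar, a i⟫ for all i
  have h1 : ∀ i, ρ ≤ (inner ℝ wstar (a i) : ℝ) := by
    intro i
    rw [← hattain]
    exact ciInf_le (Set.finite_range _).bddBelow i
  -- ρ ≤ 1
  have hρ1 : ρ ≤ 1 := by
    have := h1 ⟨0, hn⟩
    have h2 := real_inner_le_norm wstar (a ⟨0, hn⟩)
    rw [hwstar, ha] at h2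
    linarith
  -- for any nonzero u there is i with ⟪u, a i⟫ ≤ ρ‖u‖
  have hmin : ∀ u : EuclideanSpace ℝ (Fin d), ∃ i, (inner ℝ u (a i) : ℝ) ≤ ρ * ‖u‖ := by
    intro u
    by_cases hu : u = 0
    · exact ⟨⟨0, hn⟩, by simp [hu]⟩
    · have hun : 0 < ‖u‖ := norm_pos_iff.mpr hu
      set u' : EuclideanSpace ℝ (Fin d) := ‖u‖⁻¹ • u with hu'
      have hu'n : ‖u'‖ = 1 := by
        rw [hu', norm_smul, norm_inv, norm_norm, inv_mul_cancel₀ (ne_of_gt hun)]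
      obtain ⟨i₀, hi₀⟩ := Finite.exists_min (fun i => (inner ℝ u' (a i) : ℝ))
      have hle : (inner ℝ u' (a i₀) : ℝ) ≤ ρ := le_trans (le_ciInf hi₀) (hopt u' hu'n)
      refine ⟨i₀, ?_⟩
      have : (inner ℝ u' (a i₀) : ℝ) = ‖u‖⁻¹ * inner ℝ u (a i₀) := by
        rw [hu', real_inner_smul_left]
      rw [this] at hle
      have := mul_le_mul_of_nonneg_left hle (le_of_lt hun)
      rw [← mul_assoc, mul_inv_cancel₀ (ne_of_gt hun), one_mul] at this
      linarith [this]
  -- key: ⟪w, a j⟫ ≤ ρ * ⟪wstar, w⟫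
  have key : (inner ℝ w (a j) : ℝ) ≤ ρ * (inner ℝ wstar w : ℝ) := by
    set c : ℝ := inner ℝ wstar w with hc
    have hcabs : |c| ≤ 1 := by
      have := abs_real_inner_le_norm wstar w
      rw [hwstar, one_mul] at this
      linarith
    refine le_of_forall_pos_le_add fun ε hε => ?_
    set η : ℝ := min 1 ε with hη
    have hη0 : 0 < η := lt_min one_pos hε
    have hη1 : η ≤ 1 := min_le_left _ _
    have hηε : η ≤ ε := min_le_right _ _
    set u : EuclideanSpace ℝ (Fin d) := wstar + η • w with hu
    -- upper bound on ‖u‖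
    have hnu2 : ‖u‖ ^ 2 = 1 + 2 * η * c + η ^ 2 * ‖w‖ ^ 2 := by
      rw [hu, norm_add_sq_real, real_inner_smul_right, norm_smul, hwstar]
      rw [Real.norm_eq_abs, abs_of_pos hη0]
      ring
    have hb0 : 0 ≤ 1 + η * c + η ^ 2 * (‖w‖ ^ 2 / 2) := by
      have : -1 ≤ c := (abs_le.mp hcabs).1
      nlinarith [sq_nonneg η, norm_nonneg w]
    have hnu : ‖u‖ ≤ 1 + η * c + η ^ 2 * (‖w‖ ^ 2 / 2) := by
      nlinarith [norm_nonneg u, sq_nonneg (η * c + η ^ 2 * (‖w‖ ^ 2 / 2))]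
    obtain ⟨i₀, hi₀⟩ := hmin u
    have hlow : ρ + η * (inner ℝ w (a j) : ℝ) ≤ (inner ℝ u (a i₀) : ℝ) := by
      have : (inner ℝ u (a i₀) : ℝ) = inner ℝ wstar (a i₀) + η * inner ℝ w (a i₀) := by
        rw [hu, inner_add_left, real_inner_smul_left]
      rw [this]
      have := h1 i₀
      have := hj i₀
      nlinarith [hj i₀, h1 i₀]
    have hρu : ρ * ‖u‖ ≤ ρ * (1 + η * c + η ^ 2 * (‖w‖ ^ 2 / 2)) :=
      mul_le_mul_of_nonneg_left hnu (le_of_lt hρpos)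
    have hchain : ρ + η * (inner ℝ w (a j) : ℝ) ≤ ρ * (1 + η * c + η ^ 2 * (‖w‖ ^ 2 / 2)) :=
      le_trans (le_trans hlow hi₀) hρu
    -- divide by η
    have hstep : (inner ℝ w (a j) : ℝ) ≤ ρ * c + η * (ρ * (‖w‖ ^ 2 / 2)) := by
      have h2 : η * (inner ℝ w (a j) : ℝ) ≤ η * (ρ * c + η * (ρ * (‖w‖ ^ 2 / 2))) := by
        linear_combination hchain
      exact le_of_mul_le_mul_left h2 hη0
    have hsmall : η * (ρ * (‖w‖ ^ 2 / 2)) ≤ ε := by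
      have h1 : ρ * (‖w‖ ^ 2 / 2) ≤ 1 := by nlinarith [norm_nonneg w]
      nlinarith [hη0]
    linarith
  -- part 1
  have hgnorm : ‖g‖ ≤ 2 := by
    rw [hg]
    calc ‖w - a j‖ ≤ ‖w‖ + ‖a j‖ := norm_sub_le _ _
      _ ≤ 1 + 1 := by rw [ha j]; linarith
      _ = 2 := by norm_num
  -- part 2
  have hpart2 : ‖w - ρ • wstar‖ ^ 2 ≤ (inner ℝ g (w - ρ • wstar) : ℝ) := by
    have hww : (inner ℝ w w : ℝ) = ‖w‖ ^ 2 := real_inner_self_eq_norm_sq w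
    have hss : (inner ℝ wstar wstar : ℝ) = 1 := by
      rw [real_inner_self_eq_norm_sq, hwstar]; norm_num
    have hexp : (inner ℝ g (w - ρ • wstar) : ℝ)
        = inner ℝ w w - ρ * inner ℝ wstar w - inner ℝ w (a j) + ρ * inner ℝ wstar (a j) := by
      rw [hg, inner_sub_left, inner_sub_right, inner_sub_right,
        real_inner_smul_right, real_inner_smul_right]
      rw [real_inner_comm (a j) wstar, real_inner_comm w wstar, real_inner_comm (a j) w]
      ring
    have hnormsq : ‖w - ρ • wstar‖ ^ 2
        = inner ℝ w w - 2 * ρ * inner ℝ wstar w + ρ ^ 2 := by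
      rw [norm_sub_sq_real, real_inner_smul_right, norm_smul, hwstar,
        Real.norm_eq_abs, abs_of_pos hρpos]
      rw [hww, real_inner_comm w wstar]
      ring
    rw [hexp, hnormsq]
    have h2 := h1 j
    nlinarith [key, h1 j]
  refine ⟨hgnorm, hpart2, ?_⟩
  -- part 3
  set s : ℝ := 1 / ((t : ℝ) + 1) with hs
  have hspos : 0 < s := by positivity
  have heq : w - s • g - ρ • wstar = (w - ρ • wstar) - s • g := by abel
  rw [heq]
  set W : EuclideanSpace ℝ (Fin d) := w - ρ • wstar with hW
  have hexp : ‖W - s • g‖ ^ 2 = ‖W‖ ^ 2 - 2 * s * (inner ℝ g W : ℝ) + s ^ 2 * ‖g‖ ^ 2 := by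
    rw [norm_sub_sq_real, real_inner_smul_right, norm_smul, Real.norm_eq_abs,
      abs_of_pos hspos, real_inner_comm W g]
    ring
  rw [hexp]
  have hg4 : ‖g‖ ^ 2 ≤ 4 := by nlinarith [norm_nonneg g]
  have h2s : (2 : ℝ) / ((t : ℝ) + 1) = 2 * s := by rw [hs]; ring
  have h4s : (4 : ℝ) / ((t : ℝ) + 1) ^ 2 = 4 * s ^ 2 := by
    rw [hs]; field_simp
  rw [h2s, h4s]
  nlinarith [hpart2, hspos, sq_nonneg s]
end

section
/- Linear convergence of the Von-Neumann–Gilbert step: let a_1,...,a_n be unit vectors, μ := |ρ_A⁻| > 0 (affine margin is −μ), and let w ∈ lin(A), w ≠ 0, w ∈ conv(A). Choose a_i with ⟨w/‖w‖, a_i⟩ ≤ −μ (which exists by definition of the affine margin). Then the point w' of minimum norm on the segment [w, a_i] satisfies ‖w'‖ ≤ ‖w‖·√(1 − μ²). -/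
set_option maxHeartbeats 1000000 in
/-- Linear convergence of one Von-Neumann–Gilbert step: if `w ∈ conv(A)` is a nonzero
point, `a i` a unit vector with `⟪w, a i⟫ ≤ -μ‖w‖` where `0 < μ ≤ 1`, then the point
of minimum norm on the segment `[w, a i]` has norm at most `‖w‖ √(1 − μ²)`. -/
theorem stmt_18 {d n : ℕ} (hn : 0 < n) (a : Fin n → EuclideanSpace ℝ (Fin d))
    (ha : ∀ i, ‖a i‖ = 1)
    (μ : ℝ) (hμ0 : 0 < μ) (hμ1 : μ ≤ 1)
    (w : EuclideanSpace ℝ (Fin d)) (hw0 : w ≠ 0)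
    (hwconv : w ∈ convexHull ℝ (Set.range a))
    (i : Fin n) (hi : (inner ℝ w (a i) : ℝ) ≤ -μ * ‖w‖) :
    ∃ l ∈ Set.Icc (0 : ℝ) 1,
      (∀ l' ∈ Set.Icc (0 : ℝ) 1, ‖l • w + (1 - l) • a i‖ ≤ ‖l' • w + (1 - l') • a i‖)
      ∧ ‖l • w + (1 - l) • a i‖ ≤ ‖w‖ * Real.sqrt (1 - μ ^ 2) := by
  set f : ℝ → ℝ := fun l => ‖l • w + (1 - l) • a i‖ with hf
  have hcont : ContinuousOn f (Set.Icc 0 1) := by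
    apply Continuous.continuousOn
    fun_prop
  obtain ⟨l, hl, hmin⟩ := isCompact_Icc.exists_isMinOn (Set.nonempty_Icc.2 zero_le_one) hcont
  refine ⟨l, hl, fun l' hl' => hmin hl', ?_⟩
  -- notation
  set W : ℝ := ‖w‖ with hW
  set c : ℝ := (inner ℝ w (a i) : ℝ) with hc
  have hWpos : 0 < W := norm_pos_iff.2 hw0
  have hcneg : c < 0 := lt_of_le_of_lt hi (by nlinarith)
  have hCS : c ≤ W := by
    have := real_inner_le_norm w (a i)
    rw [ha i] at this; simpa using this
  have hCS' : -W ≤ c := by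
    have := abs_real_inner_le_norm w (a i)
    rw [ha i] at this
    have := neg_le_of_abs_le (by simpa using this)
    simpa using this
  set D : ℝ := W ^ 2 - 2 * c + 1 with hD
  have hDpos : 0 < D := by nlinarith
  set l₀ : ℝ := (1 - c) / D with hl₀
  have hl₀mem : l₀ ∈ Set.Icc (0 : ℝ) 1 := by
    constructor
    · apply div_nonneg (by nlinarith) hDpos.le
    · rw [div_le_one hDpos]; nlinarith
  have hnorm : ∀ t : ℝ, (f t) ^ 2 = t ^ 2 * W ^ 2 + 2 * t * (1 - t) * c + (1 - t) ^ 2 := by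
    intro t
    have := norm_add_sq_real (t • w) ((1 - t) • a i)
    rw [hf]
    simp only [this, norm_smul, inner_smul_left, inner_smul_right, Real.norm_eq_abs,
      ha i, ← hc, ← hW]
    rw [mul_pow, mul_pow, sq_abs, sq_abs]
    simp only [starRingEnd_apply, star_trivial]
    ring
  have hfl₀ : (f l₀) ^ 2 ≤ W ^ 2 * (1 - μ ^ 2) := by
    rw [hnorm l₀, hl₀]
    have hμc : μ * W ≤ -c := by linarith [hi]
    have hc2 : μ ^ 2 * W ^ 2 ≤ c ^ 2 := by
      nlinarith [mul_nonneg (by linarith : (0:ℝ) ≤ -c - μ * W)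
        (by nlinarith : (0:ℝ) ≤ -c + μ * W)]
    rw [div_pow]
    have key : ((1 - c) ^ 2 / D ^ 2) * W ^ 2 + 2 * ((1 - c) / D) * (1 - (1 - c) / D) * c
        + (1 - (1 - c) / D) ^ 2 = (W ^ 2 - c ^ 2) / D := by
      field_simp
      ring
    rw [key]
    have hD1 : 1 ≤ D := by nlinarith
    rw [div_le_iff₀ hDpos]
    have h1 : W ^ 2 - c ^ 2 ≤ W ^ 2 * (1 - μ ^ 2) := by nlinarith
    have h2 : (0:ℝ) ≤ W ^ 2 * (1 - μ ^ 2) := by nlinarith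
    have h3 : W ^ 2 * (1 - μ ^ 2) * 1 ≤ W ^ 2 * (1 - μ ^ 2) * D :=
      mul_le_mul_of_nonneg_left hD1 h2
    linarith
  have hle : f l ≤ f l₀ := hmin hl₀mem
  have h2 : f l ≤ W * Real.sqrt (1 - μ ^ 2) := by
    have hrhs : 0 ≤ W * Real.sqrt (1 - μ ^ 2) := by positivity
    have hsq : (f l) ^ 2 ≤ (W * Real.sqrt (1 - μ ^ 2)) ^ 2 := by
      rw [mul_pow, Real.sq_sqrt (by nlinarith : (0:ℝ) ≤ 1 - μ ^ 2)]
      have hfl : (f l) ^ 2 ≤ (f l₀) ^ 2 := pow_le_pow_left₀ (norm_nonneg _) hle 2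
      exact hfl.trans hfl₀
    have := Real.sqrt_le_sqrt hsq
    rwa [Real.sqrt_sq (norm_nonneg _), Real.sqrt_sq hrhs] at this
  exact h2
end
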